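/- arXiv:2005.13436 — 2 statements merged into one kernel-verified Lean document; each statement's English description precedes it below -/
import Mathlib

section
/- Under Assumption 2 and one DGT step with stepsize α > 0, the iterates satisfy ‖y_{k+1} − 𝒥y_{k+1}‖ ≤ (ρ + αL₂L₃(1 + L₃))‖y_k − 𝒥y_k‖ + αL₁L₂(1 + L₃)²‖x_k − x*‖ + (αL₁L₂(1 + L₃) + L₂‖A − I‖)‖σ_k − 𝒥σ_k‖, where ρ := ‖A − J‖ and ‖A − I‖ is the ℓ₂-operator norm. -/
noncomputable section
open scoped BigOperators

/-- The stacked decision space `ℝⁿ = ℝ^{n₁} × ⋯ × ℝ^{n_N}` with the stacked Euclidean norm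
`‖x‖² = Σᵢ ‖xᵢ‖²`. -/
abbrev StackedX (N : ℕ) (nn : Fin N → ℕ) :=
  PiLp 2 (fun i => EuclideanSpace ℝ (Fin (nn i)))

/-- The stacked aggregate space `ℝ^{Nd}` with the stacked Euclidean norm. -/
abbrev StackedY (N d : ℕ) := PiLp 2 (fun _ : Fin N => EuclideanSpace ℝ (Fin d))

/-- The averaging operator `𝒥 z = 1_N ⊗ ((1/N) Σᵢ zᵢ)`. -/
def Jmap {N d : ℕ} (z : StackedY N d) : StackedY N d :=
  WithLp.toLp 2 (fun _ => (N : ℝ)⁻¹ • ∑ j, z j)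

/-- The ℓ₂-operator (spectral) norm of a real matrix. -/
def matrixL2OpNorm {N : ℕ} (M : Matrix (Fin N) (Fin N) ℝ) : ℝ :=
  ‖LinearMap.toContinuousLinearMap (Matrix.toEuclideanLin M)‖

/-- The averaging matrix `J = (1/N) 1_N 1_Nᵀ`. -/
def consensusJ (N : ℕ) : Matrix (Fin N) (Fin N) ℝ := Matrix.of fun _ _ => (N : ℝ)⁻¹

/-- The stacked map `(x,y) ↦ ∇₁f(x,y) + ∇φ(x)(1_N ⊗ (1/N)Σᵢ ∇₂fᵢ(xᵢ,yᵢ))`, where `∇φᵢ(xᵢ)`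
acts as the adjoint (transposed Jacobian) of the derivative of `φᵢ`. -/
def combinedGrad {N d : ℕ} {nn : Fin N → ℕ}
    (φ : ∀ i, EuclideanSpace ℝ (Fin (nn i)) → EuclideanSpace ℝ (Fin d))
    (g1 : ∀ i, EuclideanSpace ℝ (Fin (nn i)) → EuclideanSpace ℝ (Fin d) →
      EuclideanSpace ℝ (Fin (nn i)))
    (g2 : ∀ i, EuclideanSpace ℝ (Fin (nn i)) → EuclideanSpace ℝ (Fin d) →
      EuclideanSpace ℝ (Fin d))
    (x : StackedX N nn) (y : StackedY N d) : StackedX N nn :=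
  WithLp.toLp 2 (fun i => g1 i (x i) (y i) +
    ContinuousLinearMap.adjoint (fderiv ℝ (φ i) (x i)) ((N : ℝ)⁻¹ • ∑ j, g2 j (x j) (y j)))

/-- The stacked map `(x,y) ↦ ∇₂f(x,y) = col(∇₂f₁(x₁,y₁),…,∇₂f_N(x_N,y_N))`. -/
def stackedGrad2 {N d : ℕ} {nn : Fin N → ℕ}
    (g2 : ∀ i, EuclideanSpace ℝ (Fin (nn i)) → EuclideanSpace ℝ (Fin d) →
      EuclideanSpace ℝ (Fin d))
    (x : StackedX N nn) (y : StackedY N d) : StackedY N d :=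
  WithLp.toLp 2 (fun i => g2 i (x i) (y i))

lemma le_of_sq_le_sq' {a b : ℝ} (h : a ^ 2 ≤ b ^ 2) (hb : 0 ≤ b) : a ≤ b := by
  nlinarith [sq_nonneg (a - b), sq_nonneg (a + b)]

lemma pilp2_norm_le_of_forall {ι : Type*} [Fintype ι] {E F : ι → Type*}
    [∀ i, NormedAddCommGroup (E i)] [∀ i, NormedAddCommGroup (F i)]
    {c : ℝ} (hc : 0 ≤ c) (w : PiLp 2 E) (v : PiLp 2 F) (h : ∀ i, ‖w i‖ ≤ c * ‖v i‖) :
    ‖w‖ ≤ c * ‖v‖ := by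
  refine le_of_sq_le_sq' ?_ (mul_nonneg hc (norm_nonneg v))
  rw [PiLp.norm_sq_eq_of_L2, mul_pow, PiLp.norm_sq_eq_of_L2, Finset.mul_sum]
  refine Finset.sum_le_sum fun i _ => ?_
  have hi := h i
  nlinarith [norm_nonneg (w i), norm_nonneg (v i)]

lemma euclid_sum_apply {d : ℕ} {β : Type*} [Fintype β] (g : β → EuclideanSpace ℝ (Fin d))
    (c : Fin d) : (∑ j, g j) c = ∑ j, g j c := by
  have h := map_sum (PiLp.projₗ (𝕜 := ℝ) (β := fun _ : Fin d => ℝ) 2 c) g Finset.univ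
  simp only [PiLp.projₗ_apply] at h
  exact h

lemma euclid_norm_sq {d : ℕ} (v : EuclideanSpace ℝ (Fin d)) : ‖v‖ ^ 2 = ∑ c, (v c) ^ 2 := by
  rw [PiLp.norm_sq_eq_of_L2]
  exact Finset.sum_congr rfl fun c _ => by rw [Real.norm_eq_abs, sq_abs]

def colVec {N d : ℕ} (z : StackedY N d) (c : Fin d) : EuclideanSpace ℝ (Fin N) :=
  WithLp.toLp 2 (fun j => z j c)

lemma colVec_apply {N d : ℕ} (z : StackedY N d) (c : Fin d) (j : Fin N) :
    colVec z c j = z j c := rfl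

lemma blockMul_norm_le {N d : ℕ} (M : Matrix (Fin N) (Fin N) ℝ) (z w : StackedY N d)
    (hw : ∀ i, w i = ∑ j, M i j • z j) :
    ‖w‖ ≤ matrixL2OpNorm M * ‖z‖ := by
  have hC : (0:ℝ) ≤ matrixL2OpNorm M := norm_nonneg _
  refine le_of_sq_le_sq' ?_ (mul_nonneg hC (norm_nonneg z))
  have hns : ∀ w : StackedY N d, ‖w‖ ^ 2 = ∑ i, ‖w i‖ ^ 2 := fun w =>
    PiLp.norm_sq_eq_of_L2 _ w
  have hcoord : ∀ (i : Fin N) (c : Fin d),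
      ((∑ j, M i j • z j : EuclideanSpace ℝ (Fin d)) c) = ∑ j, M i j * z j c := by
    intro i c
    rw [euclid_sum_apply]
    rfl
  calc ‖w‖ ^ 2
      = ∑ i, ‖(∑ j, M i j • z j : EuclideanSpace ℝ (Fin d))‖ ^ 2 := by
        rw [hns]; exact Finset.sum_congr rfl fun i _ => by rw [hw]
    _ = ∑ c : Fin d, ∑ i : Fin N, (∑ j, M i j * z j c) ^ 2 := by
        rw [Finset.sum_comm]
        refine Finset.sum_congr rfl fun i _ => ?_
        rw [euclid_norm_sq]
        exact Finset.sum_congr rfl fun c _ => by rw [hcoord]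
    _ ≤ ∑ c : Fin d, matrixL2OpNorm M ^ 2 * ‖(colVec z c)‖ ^ 2 := by
        refine Finset.sum_le_sum fun c _ => ?_
        have hnorm : ‖Matrix.toEuclideanLin M (colVec z c)‖
            ≤ matrixL2OpNorm M * ‖(colVec z c)‖ :=
          (LinearMap.toContinuousLinearMap (Matrix.toEuclideanLin M)).le_opNorm _
    
        have h2 : ‖Matrix.toEuclideanLin M (colVec z c)‖ ^ 2
            = ∑ i, (∑ j, M i j * z j c) ^ 2 := by
          rw [euclid_norm_sq]
          refine Finset.sum_congr rfl fun i _ => ?_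
          congr 1
        rw [← h2]
        nlinarith [norm_nonneg (Matrix.toEuclideanLin M (colVec z c)),
          mul_nonneg hC (norm_nonneg (colVec z c))]
    _ = (matrixL2OpNorm M * ‖z‖) ^ 2 := by
        rw [← Finset.mul_sum, mul_pow]
        congr 1
        rw [hns]
        have : ∀ c : Fin d, ‖(colVec z c)‖ ^ 2
            = ∑ j, (z j c) ^ 2 := fun c => euclid_norm_sq _
        simp only [this]
        rw [Finset.sum_comm]
        exact Finset.sum_congr rfl fun j _ => (euclid_norm_sq (z j)).symm

lemma jmap_pythagoras {N d : ℕ} (hN : 0 < N) (z : StackedY N d) :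
    ‖z‖ ^ 2 = ‖z - Jmap z‖ ^ 2 + ‖Jmap z‖ ^ 2 := by
  have hinner : (inner ℝ (z - Jmap z) (Jmap z) : ℝ) = 0 := by
    set m : EuclideanSpace ℝ (Fin d) := (N : ℝ)⁻¹ • ∑ j, z j with hm
    rw [PiLp.inner_apply]
    have hcomp : ∀ i : Fin N, (inner ℝ ((z - Jmap z) i) (Jmap z i) : ℝ)
        = inner ℝ (z i) m - inner ℝ m m := by
      intro i
      have h1 : (z - Jmap z) i = z i - m := rfl
      have h2 : Jmap z i = m := rfl
      rw [h1, h2, inner_sub_left]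
    simp only [hcomp]
    rw [Finset.sum_sub_distrib, ← sum_inner, Finset.sum_const, Finset.card_univ,
      Fintype.card_fin]
    have hS : (∑ j, z j : EuclideanSpace ℝ (Fin d)) = (N : ℝ) • m := by
      rw [hm, smul_smul, mul_inv_cancel₀ (by exact_mod_cast hN.ne'), one_smul]
    have hkey : (inner ℝ (∑ j, z j) m : ℝ) = N • (inner ℝ m m : ℝ) := by
      rw [hS, real_inner_smul_left, nsmul_eq_mul]
    rw [hkey, sub_self]
  have hz : (z - Jmap z) + Jmap z = z := by abel
  calc ‖z‖ ^ 2 = ‖(z - Jmap z) + Jmap z‖ ^ 2 := by rw [hz]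
    _ = ‖z - Jmap z‖ ^ 2 + 2 * (inner ℝ (z - Jmap z) (Jmap z) : ℝ) + ‖Jmap z‖ ^ 2 :=
        norm_add_sq_real _ _
    _ = ‖z - Jmap z‖ ^ 2 + ‖Jmap z‖ ^ 2 := by rw [hinner]; ring

lemma norm_sub_jmap_le {N d : ℕ} (hN : 0 < N) (z : StackedY N d) : ‖z - Jmap z‖ ≤ ‖z‖ :=
  le_of_sq_le_sq' (by nlinarith [jmap_pythagoras hN z, sq_nonneg ‖Jmap z‖]) (norm_nonneg z)

lemma norm_jmap_le {N d : ℕ} (hN : 0 < N) (z : StackedY N d) : ‖Jmap z‖ ≤ ‖z‖ :=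
  le_of_sq_le_sq' (by nlinarith [jmap_pythagoras hN z, sq_nonneg ‖z - Jmap z‖]) (norm_nonneg z)

lemma gradF_eq {N d : ℕ} {nn : Fin N → ℕ}
    (φ : ∀ i, EuclideanSpace ℝ (Fin (nn i)) → EuclideanSpace ℝ (Fin d))
    (f : ∀ i, EuclideanSpace ℝ (Fin (nn i)) → EuclideanSpace ℝ (Fin d) → ℝ)
    (hφdiff : ∀ i, Differentiable ℝ (φ i))
    (hfdiff : ∀ i, Differentiable ℝ
      (fun p : EuclideanSpace ℝ (Fin (nn i)) × EuclideanSpace ℝ (Fin d) => f i p.1 p.2))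
    (g1 : ∀ i, EuclideanSpace ℝ (Fin (nn i)) → EuclideanSpace ℝ (Fin d) →
      EuclideanSpace ℝ (Fin (nn i)))
    (g2 : ∀ i, EuclideanSpace ℝ (Fin (nn i)) → EuclideanSpace ℝ (Fin d) →
      EuclideanSpace ℝ (Fin d))
    (hg1 : ∀ i u s, g1 i u s = gradient (fun z => f i z s) u)
    (hg2 : ∀ i u s, g2 i u s = gradient (f i u) s)
    (F : StackedX N nn → ℝ)
    (hF : ∀ x : StackedX N nn, F x = ∑ i, f i (x i) ((N : ℝ)⁻¹ • ∑ j, φ j (x j)))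
    (x : StackedX N nn) (yb : StackedY N d)
    (hyb : ∀ i, yb i = (N : ℝ)⁻¹ • ∑ j, φ j (x j)) :
    gradient F x = combinedGrad φ g1 g2 x yb := by
  classical
  set σx : EuclideanSpace ℝ (Fin d) := (N : ℝ)⁻¹ • ∑ j, φ j (x j) with hσx
  set pr : ∀ i, StackedX N nn →L[ℝ] EuclideanSpace ℝ (Fin (nn i)) :=
    fun i => PiLp.proj (𝕜 := ℝ) (β := fun i => EuclideanSpace ℝ (Fin (nn i))) 2 i with hpr
  set Sx : StackedX N nn →L[ℝ] EuclideanSpace ℝ (Fin d) :=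
    (N : ℝ)⁻¹ • ∑ j, (fderiv ℝ (φ j) (x j)).comp (pr j) with hSx
  have hσ_deriv : HasFDerivAt
      (fun z : StackedX N nn => (N : ℝ)⁻¹ • ∑ j, φ j (z j)) Sx x := by
    have h1 : ∀ j : Fin N, HasFDerivAt (fun z : StackedX N nn => φ j (z j))
        ((fderiv ℝ (φ j) (x j)).comp (pr j)) x :=
      fun j => HasFDerivAt.comp x ((hφdiff j (x j)).hasFDerivAt) ((pr j).hasFDerivAt)
    exact (HasFDerivAt.fun_sum (fun j (_ : j ∈ Finset.univ) => h1 j)).const_smul ((N : ℝ)⁻¹)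
  set Di : ∀ i, (EuclideanSpace ℝ (Fin (nn i)) × EuclideanSpace ℝ (Fin d)) →L[ℝ] ℝ :=
    fun i => fderiv ℝ (fun p : EuclideanSpace ℝ (Fin (nn i)) × EuclideanSpace ℝ (Fin d) =>
      f i p.1 p.2) (x i, σx) with hDidef
  have hDi : ∀ i, HasFDerivAt (fun p : EuclideanSpace ℝ (Fin (nn i)) × EuclideanSpace ℝ (Fin d) =>
      f i p.1 p.2) (Di i) ((x i, σx)) := fun i => ((hfdiff i) (x i, σx)).hasFDerivAt
  set L : StackedX N nn →L[ℝ] ℝ := ∑ i, (Di i).comp ((pr i).prod Sx) with hLdef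
  have hFderiv : HasFDerivAt F L x := by
    have hterm : ∀ i : Fin N, HasFDerivAt
        (fun z : StackedX N nn => f i (pr i z) ((N : ℝ)⁻¹ • ∑ j, φ j (z j)))
        ((Di i).comp ((pr i).prod Sx)) x := by
      intro i
      have hp : HasFDerivAt (fun z : StackedX N nn =>
          ((pr i z, (N : ℝ)⁻¹ • ∑ j, φ j (z j)) :
            EuclideanSpace ℝ (Fin (nn i)) × EuclideanSpace ℝ (Fin d)))
          ((pr i).prod Sx) x := (pr i).hasFDerivAt.prodMk hσ_deriv
      exact HasFDerivAt.comp x (hDi i) hp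
    have hsum := HasFDerivAt.fun_sum (fun i (_ : i ∈ Finset.univ) => hterm i)
    exact hsum.congr_of_eventuallyEq (Filter.Eventually.of_forall (fun z => hF z))
  have hgrad : HasGradientAt F ((InnerProductSpace.toDual ℝ _).symm L) x :=
    hFderiv.hasGradientAt
  have hmain : L = (InnerProductSpace.toDual ℝ (StackedX N nn)) (combinedGrad φ g1 g2 x yb) := by
    refine ContinuousLinearMap.ext fun v => ?_
    rw [InnerProductSpace.toDual_apply_apply]
    -- per-i facts about Di
    have hDi1 : ∀ (i : Fin N) (a : EuclideanSpace ℝ (Fin (nn i))),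
        (Di i) (a, 0) = (inner ℝ (g1 i (x i) σx) a : ℝ) := by
      intro i a
      have hpart : HasFDerivAt (fun z : EuclideanSpace ℝ (Fin (nn i)) => f i z σx)
          ((Di i).comp (ContinuousLinearMap.inl ℝ _ _)) (x i) :=
        by have h := HasFDerivAt.comp (x i) (hDi i) (hasFDerivAt_prodMk_left (𝕜 := ℝ) (E := EuclideanSpace ℝ (Fin (nn i))) (x i) σx); exact h
      have hgr := hpart.hasGradientAt.gradient
      rw [hg1 i (x i) σx, hgr, InnerProductSpace.toDual_symm_apply]
      rfl
    have hDi2 : ∀ (i : Fin N) (b : EuclideanSpace ℝ (Fin d)),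
        (Di i) (0, b) = (inner ℝ (g2 i (x i) σx) b : ℝ) := by
      intro i b
      have hpart : HasFDerivAt (fun s : EuclideanSpace ℝ (Fin d) => f i (x i) s)
          ((Di i).comp (ContinuousLinearMap.inr ℝ _ _)) σx :=
        HasFDerivAt.comp σx (hDi i) (hasFDerivAt_prodMk_right (𝕜 := ℝ) (x i) σx)
      have hgr := hpart.hasGradientAt.gradient
      rw [hg2 i (x i) σx, hgr, InnerProductSpace.toDual_symm_apply]
      rfl
    have hLv : L v = ∑ i, ((inner ℝ (g1 i (x i) σx) (v i) : ℝ)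
        + (inner ℝ (g2 i (x i) σx) (Sx v) : ℝ)) := by
      rw [hLdef]
      rw [ContinuousLinearMap.sum_apply]
      refine Finset.sum_congr rfl fun i _ => ?_
      have hsplit : ((pr i v, Sx v) :
          EuclideanSpace ℝ (Fin (nn i)) × EuclideanSpace ℝ (Fin d))
          = (pr i v, 0) + (0, Sx v) := by simp
      calc (Di i) ((pr i).prod Sx v) = (Di i) (pr i v, Sx v) := rfl
        _ = (Di i) ((pr i v, 0) + (0, Sx v)) := by rw [← hsplit]
        _ = (Di i) (pr i v, 0) + (Di i) (0, Sx v) := map_add _ _ _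
        _ = (inner ℝ (g1 i (x i) σx) (v i) : ℝ) + (inner ℝ (g2 i (x i) σx) (Sx v) : ℝ) := by
            rw [hDi1 i, hDi2 i]; rfl
    rw [hLv, PiLp.inner_apply]
    -- now expand RHS
    have hGi : ∀ i : Fin N, combinedGrad φ g1 g2 x yb i
        = g1 i (x i) σx + ContinuousLinearMap.adjoint (fderiv ℝ (φ i) (x i))
            ((N : ℝ)⁻¹ • ∑ j, g2 j (x j) σx) := by
      intro i
      show g1 i (x i) (yb i) + _ = _
      rw [hyb i]
      have hs : (∑ j, g2 j (x j) (yb j)) = ∑ j, g2 j (x j) σx :=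
        Finset.sum_congr rfl fun j _ => by rw [hyb j]
      rw [hs]
    have hRHS : ∀ i : Fin N, (inner ℝ (combinedGrad φ g1 g2 x yb i) (v i) : ℝ)
        = (inner ℝ (g1 i (x i) σx) (v i) : ℝ)
          + (inner ℝ ((N : ℝ)⁻¹ • ∑ j, g2 j (x j) σx) ((fderiv ℝ (φ i) (x i)) (v i)) : ℝ) := by
      intro i
      rw [hGi i, inner_add_left, ContinuousLinearMap.adjoint_inner_left]
    simp only [hRHS]
    rw [Finset.sum_add_distrib, Finset.sum_add_distrib]
    congr 1
    -- remaining: ∑ i, ⟪g2 i, Sx v⟫ = ∑ i, ⟪(N⁻¹ • ∑ g2 j), Dφ i (v i)⟫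
    have hSxv : Sx v = (N : ℝ)⁻¹ • ∑ j, (fderiv ℝ (φ j) (x j)) (v j) := by
      rw [hSx]
      rw [ContinuousLinearMap.smul_apply, ContinuousLinearMap.sum_apply]
      rfl
    calc ∑ i, (inner ℝ (g2 i (x i) σx) (Sx v) : ℝ)
        = (inner ℝ (∑ i, g2 i (x i) σx) (Sx v) : ℝ) := (sum_inner _ _ _).symm
      _ = (N : ℝ)⁻¹ * (inner ℝ (∑ i, g2 i (x i) σx) (∑ j, (fderiv ℝ (φ j) (x j)) (v j)) : ℝ) := by
          rw [hSxv, real_inner_smul_right]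
      _ = ∑ i, (inner ℝ ((N : ℝ)⁻¹ • ∑ j, g2 j (x j) σx) ((fderiv ℝ (φ i) (x i)) (v i)) : ℝ) := by
          rw [inner_sum]
          rw [Finset.mul_sum]
          refine Finset.sum_congr rfl fun i _ => ?_
          rw [real_inner_smul_left]

  rw [hgrad.gradient, hmain, LinearIsometryEquiv.symm_apply_apply]

lemma sum_sub_smul_sub {N d : ℕ} (a b : Fin N → ℝ) (ha : ∑ j, a j = 1) (hb : ∑ j, b j = 1)
    (z : StackedY N d) (m : EuclideanSpace ℝ (Fin d)) :
    ∑ j, (a j - b j) • (z j - m) = (∑ j, a j • z j) - ∑ j, b j • z j := by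
  have hterm : ∀ j : Fin N, (a j - b j) • (z j - m)
      = (a j • z j - b j • z j) - (a j • m - b j • m) := by
    intro j
    rw [sub_smul, smul_sub, smul_sub]
    abel
  rw [Finset.sum_congr rfl fun j _ => hterm j, Finset.sum_sub_distrib,
    Finset.sum_sub_distrib, Finset.sum_sub_distrib, ← Finset.sum_smul, ← Finset.sum_smul,
    ha, hb]
  abel

set_option maxHeartbeats 1000000

/-- Under Assumption 2 and one DGT step with stepsize `α > 0`,
`‖y_{k+1} - 𝒥y_{k+1}‖ ≤ (ρ + αL₂L₃(1+L₃))‖y_k - 𝒥y_k‖ + αL₁L₂(1+L₃)²‖x_k - x*‖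
+ (αL₁L₂(1+L₃) + L₂‖A - I‖)‖σ_k - 𝒥σ_k‖`, with `ρ = ‖A - J‖` and `‖A - I‖` the
ℓ₂-operator norm. -/
theorem dgt_onestep_y_consensus_bound (N d : ℕ) (hN : 0 < N) (nn : Fin N → ℕ)
    (φ : ∀ i, EuclideanSpace ℝ (Fin (nn i)) → EuclideanSpace ℝ (Fin d))
    (f : ∀ i, EuclideanSpace ℝ (Fin (nn i)) → EuclideanSpace ℝ (Fin d) → ℝ)
    (hφdiff : ∀ i, Differentiable ℝ (φ i))
    (hfdiff : ∀ i, Differentiable ℝ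
      (fun p : EuclideanSpace ℝ (Fin (nn i)) × EuclideanSpace ℝ (Fin d) => f i p.1 p.2))
    -- the partial gradients ∇₁fᵢ and ∇₂fᵢ
    (g1 : ∀ i, EuclideanSpace ℝ (Fin (nn i)) → EuclideanSpace ℝ (Fin d) →
      EuclideanSpace ℝ (Fin (nn i)))
    (g2 : ∀ i, EuclideanSpace ℝ (Fin (nn i)) → EuclideanSpace ℝ (Fin d) →
      EuclideanSpace ℝ (Fin d))
    (hg1 : ∀ i u s, g1 i u s = gradient (fun z => f i z s) u)
    (hg2 : ∀ i u s, g2 i u s = gradient (f i u) s)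
    -- the global objective f(x) = Σᵢ fᵢ(xᵢ, σ(x)) with σ(x) = (1/N)Σᵢ φᵢ(xᵢ)
    (F : StackedX N nn → ℝ)
    (hF : ∀ x : StackedX N nn, F x = ∑ i, f i (x i) ((N : ℝ)⁻¹ • ∑ j, φ j (x j)))
    -- Assumption 2
    (μ L₁ L₂ L₃ : ℝ) (hμ : 0 < μ) (hL₁ : 0 < L₁) (hL₂ : 0 < L₂) (hL₃ : 0 < L₃)
    (hFdiff : Differentiable ℝ F)
    (hsc : ∀ x y : StackedX N nn,
      F x ≥ F y + (inner ℝ (gradient F y) (x - y) : ℝ) + μ / 2 * ‖x - y‖ ^ 2)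
    (hsmooth : ∀ x y : StackedX N nn, ‖gradient F x - gradient F y‖ ≤ L₁ * ‖x - y‖)
    (hGlip : ∀ (x x' : StackedX N nn) (y y' : StackedY N d),
      ‖combinedGrad φ g1 g2 x y - combinedGrad φ g1 g2 x' y'‖ ≤ L₁ * (‖x - x'‖ + ‖y - y'‖))
    (hG2lip : ∀ (x x' : StackedX N nn) (y y' : StackedY N d),
      ‖stackedGrad2 g2 x y - stackedGrad2 g2 x' y'‖ ≤ L₂ * (‖x - x'‖ + ‖y - y'‖))
    (hφbound : ∀ (i : Fin N) (xi : EuclideanSpace ℝ (Fin (nn i))), ‖fderiv ℝ (φ i) xi‖ ≤ L₃)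
    -- the weight matrix
    (A : Matrix (Fin N) (Fin N) ℝ)
    (hA0 : ∀ i j, 0 ≤ A i j)
    (hrow : ∀ i, ∑ j, A i j = 1) (hcol : ∀ j, ∑ i, A i j = 1)
    -- the minimizer of F
    (xstar : StackedX N nn) (hmin : ∀ z, F xstar ≤ F z)
    -- one DGT step
    (α : ℝ) (hα0 : 0 < α)
    (xk xk1 : StackedX N nn) (σk σk1 yk yk1 : StackedY N d)
    (htrackσ : (N : ℝ)⁻¹ • ∑ i, σk i = (N : ℝ)⁻¹ • ∑ i, φ i (xk i))
    (htracky : (N : ℝ)⁻¹ • ∑ i, yk i = (N : ℝ)⁻¹ • ∑ i, g2 i (xk i) (σk i))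
    (hxup : ∀ i, xk1 i = xk i - α • (g1 i (xk i) (σk i) +
      ContinuousLinearMap.adjoint (fderiv ℝ (φ i) (xk i)) (yk i)))
    (hσup : ∀ i, σk1 i = ∑ j, A i j • σk j + φ i (xk1 i) - φ i (xk i))
    (hyup : ∀ i, yk1 i = ∑ j, A i j • yk j + g2 i (xk1 i) (σk1 i) - g2 i (xk i) (σk i)) :
    ‖yk1 - Jmap yk1‖ ≤ (matrixL2OpNorm (A - consensusJ N) + α * L₂ * L₃ * (1 + L₃)) * ‖yk - Jmap yk‖ +
      α * L₁ * L₂ * (1 + L₃) ^ 2 * ‖xk - xstar‖ +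
      (α * L₁ * L₂ * (1 + L₃) + L₂ * matrixL2OpNorm (A - 1)) * ‖σk - Jmap σk‖ := by
  classical
  have hNR : ((N : ℝ)) ≠ 0 := by exact_mod_cast hN.ne'
  have hφlip : ∀ (i : Fin N) (a b : EuclideanSpace ℝ (Fin (nn i))),
      ‖φ i a - φ i b‖ ≤ L₃ * ‖a - b‖ := by
    intro i a b
    exact Convex.norm_image_sub_le_of_norm_fderiv_le
      (fun z _ => (hφdiff i z)) (fun z _ => hφbound i z) convex_univ
      (Set.mem_univ b) (Set.mem_univ a)
  set ρ := matrixL2OpNorm (A - consensusJ N) with hρdef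
  set β := matrixL2OpNorm (A - (1 : Matrix (Fin N) (Fin N) ℝ)) with hβdef
  set ty : StackedY N d := yk - Jmap yk with htydef
  set tσ : StackedY N d := σk - Jmap σk with htσdef
  set Δ : StackedY N d := stackedGrad2 g2 xk1 σk1 - stackedGrad2 g2 xk σk with hΔdef
  have hΔi : ∀ i, Δ i = g2 i (xk1 i) (σk1 i) - g2 i (xk i) (σk i) := fun i => rfl
  have htyi : ∀ j, ty j = yk j - (N : ℝ)⁻¹ • ∑ l, yk l := fun j => rfl
  have htσi : ∀ j, tσ j = σk j - (N : ℝ)⁻¹ • ∑ l, σk l := fun j => rfl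
  have hinvsum : (∑ _j : Fin N, (N : ℝ)⁻¹) = 1 := by
    rw [Finset.sum_const, Finset.card_univ, Fintype.card_fin, nsmul_eq_mul,
      mul_inv_cancel₀ hNR]
  -- Step 1 : consensus contraction for y
  have hyk1 : ∀ i, yk1 i = (∑ j, A i j • yk j) + Δ i := by
    intro i
    rw [hyup i, hΔi i]
    abel
  have hsumyk1 : ∑ l, yk1 l = (∑ j, yk j) + ∑ l, Δ l := by
    calc ∑ l, yk1 l = ∑ l, ((∑ j, A l j • yk j) + Δ l) :=
          Finset.sum_congr rfl fun l _ => hyk1 l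
      _ = (∑ l, ∑ j, A l j • yk j) + ∑ l, Δ l := Finset.sum_add_distrib
      _ = (∑ j, yk j) + ∑ l, Δ l := by
          congr 1
          rw [Finset.sum_comm]
          refine Finset.sum_congr rfl fun j _ => ?_
          rw [← Finset.sum_smul, hcol j, one_smul]
  set W1 : StackedY N d := yk1 - Jmap yk1 - (Δ - Jmap Δ) with hW1def
  have hW1 : ∀ i, W1 i = ∑ j, (A - consensusJ N) i j • ty j := by
    intro i
    have e1 : W1 i = yk1 i - (N : ℝ)⁻¹ • (∑ l, yk1 l)
        - (Δ i - (N : ℝ)⁻¹ • ∑ l, Δ l) := rfl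
    have hentry : ∀ j, (A - consensusJ N) i j = A i j - (N : ℝ)⁻¹ := by
      intro j; simp [consensusJ, Matrix.sub_apply]
    have hrhs : ∑ j, (A - consensusJ N) i j • ty j
        = (∑ j, A i j • yk j) - ∑ j, (N : ℝ)⁻¹ • yk j := by
      rw [Finset.sum_congr rfl fun j _ => by rw [hentry j, htyi j]]
      exact sum_sub_smul_sub _ _ (hrow i) hinvsum yk _
    rw [e1, hyk1 i, hsumyk1, smul_add, hrhs, Finset.smul_sum]
    abel
  have hstep1 : ‖yk1 - Jmap yk1‖ ≤ ρ * ‖ty‖ + ‖Δ‖ := by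
    have h1 : ‖W1‖ ≤ ρ * ‖ty‖ := blockMul_norm_le _ _ _ hW1
    have h2 : ‖Δ - Jmap Δ‖ ≤ ‖Δ‖ := norm_sub_jmap_le hN Δ
    have h3 : yk1 - Jmap yk1 = W1 + (Δ - Jmap Δ) := by rw [hW1def]; abel
    calc ‖yk1 - Jmap yk1‖ = ‖W1 + (Δ - Jmap Δ)‖ := by rw [h3]
      _ ≤ ‖W1‖ + ‖Δ - Jmap Δ‖ := norm_add_le _ _
      _ ≤ ρ * ‖ty‖ + ‖Δ‖ := add_le_add h1 h2
  -- Step 2 : bound on Δ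
  have hstep2 : ‖Δ‖ ≤ L₂ * (‖xk1 - xk‖ + ‖σk1 - σk‖) := hG2lip xk1 xk σk1 σk
  -- Step 3 : bound on x update
  set Gk : StackedX N nn := combinedGrad φ g1 g2 xk σk with hGkdef
  set R : StackedX N nn := (xk1 - xk) + α • Gk with hRdef
  have hRcomp : ∀ i, R i
      = -(α • (ContinuousLinearMap.adjoint (fderiv ℝ (φ i) (xk i)) (ty i))) := by
    intro i
    have e : R i = (xk1 i - xk i) + α • Gk i := rfl
    have hGki : Gk i = g1 i (xk i) (σk i) + ContinuousLinearMap.adjoint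
        (fderiv ℝ (φ i) (xk i)) ((N : ℝ)⁻¹ • ∑ l, yk l) := by
      show g1 i (xk i) (σk i) + ContinuousLinearMap.adjoint (fderiv ℝ (φ i) (xk i))
        ((N : ℝ)⁻¹ • ∑ j, g2 j (xk j) (σk j)) = _
      rw [← htracky]
    rw [e, hxup i, hGki, htyi i]
    simp only [map_sub, smul_sub, smul_add]
    abel
  have hRnorm : ‖R‖ ≤ α * L₃ * ‖ty‖ := by
    refine pilp2_norm_le_of_forall (by positivity) R ty fun i => ?_
    rw [hRcomp i, norm_neg, norm_smul, Real.norm_eq_abs, abs_of_pos hα0]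
    have hadj : ‖ContinuousLinearMap.adjoint (fderiv ℝ (φ i) (xk i)) (ty i)‖
        ≤ L₃ * ‖ty i‖ := by
      calc ‖ContinuousLinearMap.adjoint (fderiv ℝ (φ i) (xk i)) (ty i)‖
          ≤ ‖ContinuousLinearMap.adjoint (fderiv ℝ (φ i) (xk i))‖ * ‖ty i‖ :=
            ContinuousLinearMap.le_opNorm _ _
        _ ≤ L₃ * ‖ty i‖ := by
            refine mul_le_mul_of_nonneg_right ?_ (norm_nonneg _)
            rw [ContinuousLinearMap.adjoint.norm_map]
            exact hφbound i (xk i)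
    calc α * ‖ContinuousLinearMap.adjoint (fderiv ℝ (φ i) (xk i)) (ty i)‖
        ≤ α * (L₃ * ‖ty i‖) := mul_le_mul_of_nonneg_left hadj hα0.le
      _ = α * L₃ * ‖ty i‖ := by ring
  have hstep3 : ‖xk1 - xk‖ ≤ α * ‖Gk‖ + α * L₃ * ‖ty‖ := by
    have h3 : xk1 - xk = R - α • Gk := by rw [hRdef]; abel
    calc ‖xk1 - xk‖ = ‖R - α • Gk‖ := by rw [h3]
      _ ≤ ‖R‖ + ‖α • Gk‖ := norm_sub_le _ _
      _ ≤ α * L₃ * ‖ty‖ + α * ‖Gk‖ := by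
          refine add_le_add hRnorm ?_
          rw [norm_smul, Real.norm_eq_abs, abs_of_pos hα0]
      _ = α * ‖Gk‖ + α * L₃ * ‖ty‖ := by ring
  -- Step 4 : bound on Gk via the minimizer
  set ybstar : StackedY N d := WithLp.toLp 2 (fun _ => (N : ℝ)⁻¹ • ∑ j, φ j (xstar j)) with hybstardef
  have hybstar : ∀ i, ybstar i = (N : ℝ)⁻¹ • ∑ j, φ j (xstar j) := fun _ => rfl
  have hgradstar : gradient F xstar = 0 := by
    have hloc : IsLocalMin F xstar := Filter.Eventually.of_forall hmin
    have hfd : fderiv ℝ F xstar = 0 := hloc.fderiv_eq_zero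
    show (InnerProductSpace.toDual ℝ (StackedX N nn)).symm (fderiv ℝ F xstar) = 0
    rw [hfd, map_zero]
  have hGstar : combinedGrad φ g1 g2 xstar ybstar = 0 := by
    rw [← gradF_eq φ f hφdiff hfdiff g1 g2 hg1 hg2 F hF xstar ybstar hybstar]
    exact hgradstar
  have hGk1 : ‖Gk‖ ≤ L₁ * (‖xk - xstar‖ + ‖σk - ybstar‖) := by
    have h := hGlip xk xstar σk ybstar
    rwa [hGstar, sub_zero] at h
  set w : StackedY N d := WithLp.toLp 2 (fun j => φ j (xk j) - φ j (xstar j)) with hwdef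
  have hw2 : Jmap σk - ybstar = Jmap w := by
    ext i : 1
    show (N : ℝ)⁻¹ • (∑ l, σk l) - (N : ℝ)⁻¹ • ∑ j, φ j (xstar j)
      = (N : ℝ)⁻¹ • ∑ j, w j
    rw [htrackσ, ← smul_sub, ← Finset.sum_sub_distrib]
  have hwnorm : ‖w‖ ≤ L₃ * ‖xk - xstar‖ := by
    refine pilp2_norm_le_of_forall hL₃.le w (xk - xstar) fun i => ?_
    exact hφlip i (xk i) (xstar i)
  have hσyb : ‖σk - ybstar‖ ≤ ‖tσ‖ + L₃ * ‖xk - xstar‖ := by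
    have hsplit : σk - ybstar = tσ + (Jmap σk - ybstar) := by rw [htσdef]; abel
    calc ‖σk - ybstar‖ = ‖tσ + (Jmap σk - ybstar)‖ := by rw [hsplit]
      _ ≤ ‖tσ‖ + ‖Jmap σk - ybstar‖ := norm_add_le _ _
      _ ≤ ‖tσ‖ + L₃ * ‖xk - xstar‖ := by
          refine add_le_add le_rfl ?_
          rw [hw2]
          exact le_trans (norm_jmap_le hN w) hwnorm
  have hstep4 : ‖Gk‖ ≤ L₁ * ((1 + L₃) * ‖xk - xstar‖ + ‖tσ‖) := by
    calc ‖Gk‖ ≤ L₁ * (‖xk - xstar‖ + ‖σk - ybstar‖) := hGk1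
      _ ≤ L₁ * (‖xk - xstar‖ + (‖tσ‖ + L₃ * ‖xk - xstar‖)) := by
          refine mul_le_mul_of_nonneg_left (add_le_add le_rfl hσyb) hL₁.le
      _ = L₁ * ((1 + L₃) * ‖xk - xstar‖ + ‖tσ‖) := by ring
  -- Step 5 : bound on σ update
  set Φδ : StackedY N d := WithLp.toLp 2 (fun i => φ i (xk1 i) - φ i (xk i)) with hΦdef
  have hΦi : ∀ i, Φδ i = φ i (xk1 i) - φ i (xk i) := fun _ => rfl
  set S : StackedY N d := (σk1 - σk) - Φδ with hSdef
  have hScomp : ∀ i, S i = ∑ j, (A - 1) i j • tσ j := by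
    intro i
    have e : S i = (σk1 i - σk i) - Φδ i := rfl
    have hone : ∑ j, ((1 : Matrix (Fin N) (Fin N) ℝ) i j) = 1 := by
      simp [Matrix.one_apply]
    have honez : ∑ j, ((1 : Matrix (Fin N) (Fin N) ℝ) i j) • σk j = σk i := by
      rw [Finset.sum_congr rfl fun j (_ : j ∈ Finset.univ) =>
        (by simp [Matrix.one_apply] : ((1 : Matrix (Fin N) (Fin N) ℝ) i j) • σk j
          = if i = j then σk j else 0)]
      simp
    have hrhs : ∑ j, (A - 1) i j • tσ j = (∑ j, A i j • σk j) - σk i := by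
      have hentry : ∀ j, (A - 1) i j = A i j - (1 : Matrix (Fin N) (Fin N) ℝ) i j := by
        intro j; simp [Matrix.sub_apply]
      rw [Finset.sum_congr rfl fun j _ => by rw [hentry j, htσi j]]
      rw [sum_sub_smul_sub _ _ (hrow i) hone σk _, honez]
    rw [e, hσup i, hΦi i, hrhs]
    abel
  have hstep5 : ‖σk1 - σk‖ ≤ β * ‖tσ‖ + L₃ * ‖xk1 - xk‖ := by
    have h1 : ‖S‖ ≤ β * ‖tσ‖ := blockMul_norm_le _ _ _ hScomp
    have h2 : ‖Φδ‖ ≤ L₃ * ‖xk1 - xk‖ := by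
      refine pilp2_norm_le_of_forall hL₃.le Φδ (xk1 - xk) fun i => ?_
      rw [hΦi i]
      exact hφlip i (xk1 i) (xk i)
    have h3 : σk1 - σk = S + Φδ := by rw [hSdef]; abel
    calc ‖σk1 - σk‖ = ‖S + Φδ‖ := by rw [h3]
      _ ≤ ‖S‖ + ‖Φδ‖ := norm_add_le _ _
      _ ≤ β * ‖tσ‖ + L₃ * ‖xk1 - xk‖ := add_le_add h1 h2
  -- Final assembly
  have m2 := hstep2
  have m3 : L₂ * ‖σk1 - σk‖ ≤ L₂ * (β * ‖tσ‖ + L₃ * ‖xk1 - xk‖) :=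
    mul_le_mul_of_nonneg_left hstep5 hL₂.le
  have m4 : (L₂ * (1 + L₃)) * ‖xk1 - xk‖
      ≤ (L₂ * (1 + L₃)) * (α * ‖Gk‖ + α * L₃ * ‖ty‖) :=
    mul_le_mul_of_nonneg_left hstep3 (by positivity)
  have m5 : (α * L₂ * (1 + L₃)) * ‖Gk‖
      ≤ (α * L₂ * (1 + L₃)) * (L₁ * ((1 + L₃) * ‖xk - xstar‖ + ‖tσ‖)) :=
    mul_le_mul_of_nonneg_left hstep4 (by positivity)
  nlinarith [hstep1, m2, m3, m4, m5, norm_nonneg ty, norm_nonneg tσ,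
    norm_nonneg (xk - xstar), norm_nonneg Gk, norm_nonneg (xk1 - xk), norm_nonneg (σk1 - σk)]
end
end

section
/- Let F : ℝⁿ → ℝ be differentiable, μ-strongly convex and L-smooth with 0 < μ ≤ L, and let 0 < α ≤ 1/L. Then the function H(x) := (1/2)‖x‖² − αF(x) is (1 − μα)-smooth, i.e. ‖∇H(x) − ∇H(y)‖ ≤ (1 − μα)‖x − y‖ for all x, y ∈ ℝⁿ. -/
open InnerProductSpace
noncomputable section
section Aux
variable {E : Type*} [NormedAddCommGroup E] [InnerProductSpace ℝ E] [CompleteSpace E]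

local notation "⟪" x ", " y "⟫" => @inner ℝ _ _ x y

lemma descent_lemma {F : E → ℝ} {L : ℝ} (hL : 0 ≤ L)
    (hdiff : Differentiable ℝ F)
    (hsmooth : ∀ x y : E, ‖gradient F x - gradient F y‖ ≤ L * ‖x - y‖) (a b : E) :
    F b ≤ F a + ⟪gradient F a, b - a⟫ + L / 2 * ‖b - a‖ ^ 2 := by
  set v := b - a with hv
  have hc : ∀ t : ℝ, HasDerivAt (fun t : ℝ => F (a + t • v))
      ⟪gradient F (a + t • v), v⟫ t := by
    intro t
    have h1 : HasDerivAt (fun t : ℝ => a + t • v) v t :=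
      by simpa using ((hasDerivAt_id t).smul_const v).const_add a
    have h2 : HasFDerivAt F (toDual ℝ E (gradient F (a + t • v))) (a + t • v) :=
      (hdiff _).hasGradientAt
    simpa [Function.comp_def] using h2.comp_hasDerivAt t h1
  set φ : ℝ → ℝ := fun t => L * ‖v‖ ^ 2 * t ^ 2 / 2 - (F (a + t • v) - t * ⟪gradient F a, v⟫)
    with hφ
  have hφd : ∀ t : ℝ, HasDerivAt φ
      (L * ‖v‖ ^ 2 * t - (⟪gradient F (a + t • v), v⟫ - ⟪gradient F a, v⟫)) t := by
    intro t
    have h1 : HasDerivAt (fun t : ℝ => L * ‖v‖ ^ 2 * t ^ 2 / 2) (L * ‖v‖ ^ 2 * t) t := by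
      have := ((hasDerivAt_pow 2 t).const_mul (L * ‖v‖ ^ 2)).div_const 2
      exact this.congr_deriv (by norm_num; ring)
    have h2 : HasDerivAt (fun t : ℝ => F (a + t • v) - t * ⟪gradient F a, v⟫)
        (⟪gradient F (a + t • v), v⟫ - ⟪gradient F a, v⟫) t :=
      (hc t).sub (by simpa using (hasDerivAt_id t).mul_const ⟪gradient F a, v⟫)
    exact h1.sub h2
  have hdφ : Differentiable ℝ φ := fun t => (hφd t).differentiableAt
  have hmono : MonotoneOn φ (Set.Icc (0:ℝ) 1) := by
    apply monotoneOn_of_deriv_nonneg (convex_Icc 0 1) hdφ.continuous.continuousOn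
      hdφ.differentiableOn
    intro t ht
    rw [interior_Icc] at ht
    rw [(hφd t).deriv]
    have h1 : ⟪gradient F (a + t • v) - gradient F a, v⟫ ≤
        ‖gradient F (a + t • v) - gradient F a‖ * ‖v‖ := real_inner_le_norm _ _
    have h2 : ‖gradient F (a + t • v) - gradient F a‖ ≤ L * (t * ‖v‖) := by
      have := hsmooth (a + t • v) a
      simpa [norm_smul, abs_of_pos ht.1] using this
    have h3 : ⟪gradient F (a + t • v), v⟫ - ⟪gradient F a, v⟫ ≤ L * (t * ‖v‖) * ‖v‖ := by
      rw [← inner_sub_left]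
      exact h1.trans (by nlinarith [norm_nonneg v])
    nlinarith [norm_nonneg v]
  have key := hmono (Set.mem_Icc.2 ⟨le_refl 0, zero_le_one⟩)
    (Set.mem_Icc.2 ⟨zero_le_one, le_refl 1⟩) zero_le_one
  have e0 : φ 0 = -F a := by simp [hφ]
  have e1 : φ 1 = L * ‖v‖ ^ 2 / 2 - (F b - ⟪gradient F a, v⟫) := by
    simp [hφ, hv]
  rw [e0, e1] at key
  linarith

lemma cocoercive_aux {F : E → ℝ} {μ L : ℝ} (hμ : 0 < μ) (hμL : μ < L)
    (hdiff : Differentiable ℝ F)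
    (hsc : ∀ x y : E, F x ≥ F y + ⟪gradient F y, x - y⟫ + μ / 2 * ‖x - y‖ ^ 2)
    (hsmooth : ∀ x y : E, ‖gradient F x - gradient F y‖ ≤ L * ‖x - y‖) (x y : E) :
    ‖(gradient F x - μ • x) - (gradient F y - μ • y)‖ ^ 2 / (L - μ) ≤
      ⟪(gradient F x - μ • x) - (gradient F y - μ • y), x - y⟫ := by
  set p : E → E := fun u => gradient F u - μ • u with hp
  set G : E → ℝ := fun u => F u - μ / 2 * ‖u‖ ^ 2 with hG
  set K : ℝ := (L - μ) / 2 with hK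
  have hK0 : 0 < K := by rw [hK]; linarith
  have hG1 : ∀ a z : E, G a + ⟪p a, z - a⟫ ≤ G z := by
    intro a z
    have h1 := hsc z a
    have h2 : ‖z - a‖ ^ 2 = ‖z‖ ^ 2 - 2 * ⟪z, a⟫ + ‖a‖ ^ 2 := norm_sub_sq_real z a
    have h3 : ⟪p a, z - a⟫ = ⟪gradient F a, z - a⟫ - μ * (⟪a, z⟫ - ‖a‖ ^ 2) := by
      simp [hp, inner_sub_left, real_inner_smul_left, inner_sub_right,
        real_inner_self_eq_norm_sq]
      ring
    have h4 : ⟪a, z⟫ = ⟪z, a⟫ := real_inner_comm z a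
    simp only [hG]
    rw [h3, h4]
    nlinarith [h1, h2]
  have hG2 : ∀ b z : E, G z ≤ G b + ⟪p b, z - b⟫ + K * ‖z - b‖ ^ 2 := by
    intro b z
    have h1 := descent_lemma (by linarith : (0:ℝ) ≤ L) hdiff hsmooth b z
    have h2 : ‖z - b‖ ^ 2 = ‖z‖ ^ 2 - 2 * ⟪z, b⟫ + ‖b‖ ^ 2 := norm_sub_sq_real z b
    have h3 : ⟪p b, z - b⟫ = ⟪gradient F b, z - b⟫ - μ * (⟪b, z⟫ - ‖b‖ ^ 2) := by
      simp [hp, inner_sub_left, real_inner_smul_left, inner_sub_right,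
        real_inner_self_eq_norm_sq]
      ring
    have h4 : ⟪b, z⟫ = ⟪z, b⟫ := real_inner_comm z b
    simp only [hG]
    rw [h3, h4]
    nlinarith [h1, h2]
  set c : ℝ := 1 / (L - μ) with hc
  have hLμ : L - μ ≠ 0 := by linarith
  have hc0 : 0 < c := by
    rw [hc]
    have h0 : 0 < L - μ := by linarith
    positivity
  have eKc : K * c = 1 / 2 := by rw [hK, hc]; field_simp
  have claimA : ∀ a b : E, G a + ⟪p a, b - a⟫ + c / 2 * ‖p b - p a‖ ^ 2 ≤ G b := by
    intro a b
    set h : E := p b - p a with hh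
    set z : E := b - c • h with hz
    have e1 : z - b = -(c • h) := by rw [hz]; abel
    have e2 : z - a = (b - a) - c • h := by rw [hz]; abel
    have c1 := hG1 a z
    have c2 := hG2 b z
    rw [e1] at c2
    rw [e2] at c1
    have e3 : ⟪p a, b - a - c • h⟫ = ⟪p a, b - a⟫ - c * ⟪p a, h⟫ := by
      rw [inner_sub_right, real_inner_smul_right]
    have e4 : ⟪p b, -(c • h)⟫ = -(c * ⟪p b, h⟫) := by
      rw [inner_neg_right, real_inner_smul_right]
    have e5 : ‖-(c • h)‖ ^ 2 = c ^ 2 * ‖h‖ ^ 2 := by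
      rw [norm_neg, norm_smul, mul_pow, Real.norm_eq_abs, sq_abs]
    rw [e3] at c1
    rw [e4, e5] at c2
    have e6 : c * ⟪p b, h⟫ - c * ⟪p a, h⟫ = c * ‖h‖ ^ 2 := by
      rw [← mul_sub, ← inner_sub_left, hh, real_inner_self_eq_norm_sq]
    have e12 : c * ‖h‖ ^ 2 - K * (c ^ 2 * ‖h‖ ^ 2) = c / 2 * ‖h‖ ^ 2 := by
      have h1 : K * (c ^ 2 * ‖h‖ ^ 2) = K * c * (c * ‖h‖ ^ 2) := by ring
      rw [h1, eKc]
      ring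
    clear_value z h c K G p
    linarith [c1, c2, e6, e12]
  have cxy := claimA x y
  have cyx := claimA y x
  have e8 : ⟪p x, y - x⟫ = -⟪p x, x - y⟫ := by
    rw [show y - x = -(x - y) by abel, inner_neg_right]
  have e9 : ‖p y - p x‖ = ‖p x - p y‖ := norm_sub_rev _ _
  rw [e8, e9] at cxy
  have sum : ⟪p y, x - y⟫ - ⟪p x, x - y⟫ + 2 * (c / 2 * ‖p x - p y‖ ^ 2) ≤ 0 := by
    linarith [cxy, cyx]
  have e13 : ‖p x - p y‖ ^ 2 / (L - μ) = 2 * (c / 2 * ‖p x - p y‖ ^ 2) := by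
    rw [hc]
    ring
  show ‖p x - p y‖ ^ 2 / (L - μ) ≤ ⟪p x - p y, x - y⟫
  rw [e13, inner_sub_left]
  linarith [sum]

lemma grad_aux {F : E → ℝ} (hdiff : Differentiable ℝ F) (α : ℝ) (H : E → ℝ)
    (hH : ∀ x, H x = 1 / 2 * ‖x‖ ^ 2 - α * F x) (x : E) :
    gradient H x = x - α • gradient F x := by
  have hHe : H = fun u => 1 / 2 * ‖u‖ ^ 2 - α * F u := funext hH
  have hF : HasFDerivAt F (toDual ℝ E (gradient F x)) x :=
    hasGradientAt_iff_hasFDerivAt.1 (hdiff x).hasGradientAt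
  have h1 : HasFDerivAt H
      (((1:ℝ)/2) • (2 • innerSL ℝ x) - α • (toDual ℝ E (gradient F x))) x := by
    rw [hHe]
    exact (((hasStrictFDerivAt_norm_sq x).hasFDerivAt).const_mul (1/2)).sub (hF.const_mul α)
  have h2 : HasGradientAt H (x - α • gradient F x) x := by
    rw [hasGradientAt_iff_hasFDerivAt]
    refine h1.congr_fderiv ?_
    ext u
    simp [InnerProductSpace.toDual_apply_apply, inner_sub_left, real_inner_smul_left]
  exact h2.gradient

lemma main_aux {F : E → ℝ} {μ L α : ℝ}
    (hμ : 0 < μ) (hμL : μ ≤ L)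
    (hdiff : Differentiable ℝ F)
    (hsc : ∀ x y : E,
      F x ≥ F y + (inner ℝ (gradient F y) (x - y) : ℝ) + μ / 2 * ‖x - y‖ ^ 2)
    (hsmooth : ∀ x y : E,
      ‖gradient F x - gradient F y‖ ≤ L * ‖x - y‖)
    (hα0 : 0 < α) (hα : α ≤ 1 / L)
    (H : E → ℝ)
    (hH : ∀ x, H x = 1 / 2 * ‖x‖ ^ 2 - α * F x) :
    ∀ x y : E,
      ‖gradient H x - gradient H y‖ ≤ (1 - μ * α) * ‖x - y‖ := by
  intro x y
  have hL0 : 0 < L := lt_of_lt_of_le hμ hμL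
  have hαL : α * L ≤ 1 := by
    have := (le_div_iff₀ hL0).1 hα
    linarith
  have hαμ : α * μ ≤ 1 := by nlinarith
  rw [grad_aux hdiff α H hH x, grad_aux hdiff α H hH y]
  set d : E := x - y with hd
  set g : E := gradient F x - gradient F y with hg
  have hvec0 : (x - α • gradient F x) - (y - α • gradient F y) = d - α • g := by
    rw [hd, hg, smul_sub]
    abel
  rw [hvec0]
  set h : E := g - μ • d with hh
  -- key inequality
  have key : α * ‖h‖ ^ 2 ≤ 2 * (1 - α * μ) * ⟪h, d⟫ := by
    have hhd : ⟪h, d⟫ = ⟪g, d⟫ - μ * ‖d‖ ^ 2 := by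
      rw [hh, inner_sub_left, real_inner_smul_left, real_inner_self_eq_norm_sq]
    rcases eq_or_lt_of_le hμL with hEq | hLt
    · -- μ = L : then h = 0
      have h1 := hsc x y
      have h2 := hsc y x
      have e1 : ⟪gradient F x, y - x⟫ = -⟪gradient F x, x - y⟫ := by
        rw [show y - x = -(x - y) by abel, inner_neg_right]
      have e2 : ‖y - x‖ = ‖x - y‖ := norm_sub_rev _ _
      rw [e1, e2] at h2
      have hgd : μ * ‖d‖ ^ 2 ≤ ⟪g, d⟫ := by
        rw [hg, hd, inner_sub_left]
        linarith
      have hgn : ‖g‖ ≤ μ * ‖d‖ := by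
        rw [hg, hd, hEq]
        exact hsmooth x y
      have hsq : ‖h‖ ^ 2 = ‖g‖ ^ 2 - 2 * (μ * ⟪g, d⟫) + μ ^ 2 * ‖d‖ ^ 2 := by
        rw [hh, norm_sub_sq_real, real_inner_smul_right, norm_smul, mul_pow,
          Real.norm_eq_abs, sq_abs]
      have hg2 : ‖g‖ ^ 2 ≤ μ ^ 2 * ‖d‖ ^ 2 := by
        nlinarith [norm_nonneg g, norm_nonneg d]
      have hh0 : ‖h‖ ^ 2 ≤ 0 := by nlinarith
      nlinarith [sq_nonneg ‖h‖]
    · -- μ < L : cocoercivity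
      have hco := cocoercive_aux hμ hLt hdiff hsc hsmooth x y
      have hvec : (gradient F x - μ • x) - (gradient F y - μ • y) = h := by
        rw [hh, hg, hd, smul_sub]
        abel
      rw [hvec] at hco
      have hLμ : (0:ℝ) < L - μ := by linarith
      have hdivnn : 0 ≤ ‖h‖ ^ 2 / (L - μ) := by positivity
      have e : ‖h‖ ^ 2 = (L - μ) * (‖h‖ ^ 2 / (L - μ)) := by
        field_simp
      have h2 : α * (L - μ) ≤ 2 * (1 - α * μ) := by nlinarith
      calc α * ‖h‖ ^ 2 = α * (L - μ) * (‖h‖ ^ 2 / (L - μ)) := by rw [mul_assoc, ← e]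
        _ ≤ 2 * (1 - α * μ) * (‖h‖ ^ 2 / (L - μ)) := by
            exact mul_le_mul_of_nonneg_right h2 hdivnn
        _ ≤ 2 * (1 - α * μ) * ⟪h, d⟫ := by
            apply mul_le_mul_of_nonneg_left hco
            nlinarith
  -- final computation
  have hvec2 : d - α • g = (1 - μ * α) • d - α • h := by
    rw [hh]
    module
  rw [hvec2]
  have hrhs0 : 0 ≤ (1 - μ * α) * ‖d‖ := by
    apply mul_nonneg _ (norm_nonneg d)
    nlinarith
  have hexp : ‖(1 - μ * α) • d - α • h‖ ^ 2
      = (1 - μ * α) ^ 2 * ‖d‖ ^ 2 - 2 * ((1 - μ * α) * (α * ⟪h, d⟫)) + α ^ 2 * ‖h‖ ^ 2 := by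
    rw [norm_sub_sq_real, real_inner_smul_left, real_inner_smul_right, norm_smul, norm_smul,
      mul_pow, mul_pow, Real.norm_eq_abs, Real.norm_eq_abs, sq_abs, sq_abs,
      real_inner_comm d h]
  have hkey2 := mul_le_mul_of_nonneg_left key hα0.le
  have hsq2 : ‖(1 - μ * α) • d - α • h‖ ^ 2 ≤ ((1 - μ * α) * ‖d‖) ^ 2 := by
    rw [hexp]
    clear_value d g h
    linarith [hkey2]
  exact (pow_le_pow_iff_left₀ (norm_nonneg _) hrhs0 two_ne_zero).1 hsq2


end Aux

/-- If `F : ℝⁿ → ℝ` is differentiable, `μ`-strongly convex and `L`-smooth with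
`0 < μ ≤ L`, and `0 < α ≤ 1/L`, then `H(x) := (1/2)‖x‖² - αF(x)` is `(1 - μα)`-smooth. -/
theorem half_sq_sub_smul_smooth (n : ℕ) (F : EuclideanSpace ℝ (Fin n) → ℝ) (μ L α : ℝ)
    (hμ : 0 < μ) (hμL : μ ≤ L)
    (hdiff : Differentiable ℝ F)
    (hsc : ∀ x y : EuclideanSpace ℝ (Fin n),
      F x ≥ F y + (inner ℝ (gradient F y) (x - y) : ℝ) + μ / 2 * ‖x - y‖ ^ 2)
    (hsmooth : ∀ x y : EuclideanSpace ℝ (Fin n),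
      ‖gradient F x - gradient F y‖ ≤ L * ‖x - y‖)
    (hα0 : 0 < α) (hα : α ≤ 1 / L)
    (H : EuclideanSpace ℝ (Fin n) → ℝ)
    (hH : ∀ x, H x = 1 / 2 * ‖x‖ ^ 2 - α * F x) :
    ∀ x y : EuclideanSpace ℝ (Fin n),
      ‖gradient H x - gradient H y‖ ≤ (1 - μ * α) * ‖x - y‖ := by
  exact main_aux hμ hμL hdiff hsc hsmooth hα0 hα H hH
end
end
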